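/- For every integer t ≥ 0: Tr( (Φ*)^t(I−J) ) ≤ N · ρ( (I−J) B_q (I−J) )^t, where (Φ*)^t denotes the t-fold iterate of Φ*, B_q = P_qᵀP_q + q²(Γ − PᵀP), Γ is the diagonal matrix with Γ_{ii} = Σ_j p_{ji}, and ρ(·) denotes the spectral radius. -/

import Mathlib

open Matrix BigOperators

/-- The map `Φ*(Y) = P_qᵀ Y P_q + q²(Ψ⁻(Pᵀ·Ψ(Y)) − Pᵀ Ψ⁻(Ψ(Y)) P)`,
where `P_q = (1−q)I + qP`. -/
noncomputable def PhiStar {N : ℕ} (P : Matrix (Fin N) (Fin N) ℝ) (q : ℝ)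
    (Y : Matrix (Fin N) (Fin N) ℝ) : Matrix (Fin N) (Fin N) ℝ :=
  ((1 - q) • (1 : Matrix (Fin N) (Fin N) ℝ) + q • P)ᵀ * Y *
      ((1 - q) • (1 : Matrix (Fin N) (Fin N) ℝ) + q • P)
    + q ^ 2 •
        (Matrix.diagonal (Pᵀ *ᵥ Matrix.diag Y)
          - Pᵀ * Matrix.diagonal (Matrix.diag Y) * P)

/-- The spectral radius of a real square matrix: the largest modulus of a
(complex) eigenvalue. -/
noncomputable def specRad {N : ℕ} (M : Matrix (Fin N) (Fin N) ℝ) : ℝ :=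
  (spectralRadius ℂ (M.map (algebraMap ℝ ℂ))).toReal

namespace Stmt11Aux

variable {N : ℕ}

lemma ctr {m n : Type*} (A : Matrix m n ℝ) : Aᴴ = Aᵀ := by
  ext i j; simp [Matrix.conjTranspose_apply]

lemma my_diagonal_sub (a b : Fin N → ℝ) :
    Matrix.diagonal (a - b) = Matrix.diagonal a - Matrix.diagonal b := by
  ext i j
  by_cases h : i = j <;> simp [h, Matrix.diagonal]

lemma cs_step (p x : Fin N → ℝ) (hp : ∀ i, 0 ≤ p i) (hs : ∑ i, p i = 1) :
    (∑ i, p i * x i) ^ 2 ≤ ∑ i, p i * x i ^ 2 := by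
  have h := Finset.sum_mul_sq_le_sq_mul_sq Finset.univ
      (fun i => Real.sqrt (p i)) (fun i => Real.sqrt (p i) * x i)
  have e1 : ∀ i, Real.sqrt (p i) * (Real.sqrt (p i) * x i) = p i * x i := by
    intro i
    rw [← mul_assoc, Real.mul_self_sqrt (hp i)]
  have e2 : ∀ i, Real.sqrt (p i) ^ 2 = p i := fun i => Real.sq_sqrt (hp i)
  have e3 : ∀ i, (Real.sqrt (p i) * x i) ^ 2 = p i * x i ^ 2 := by
    intro i; rw [mul_pow, e2]
  calc (∑ i, p i * x i) ^ 2
      = (∑ i, Real.sqrt (p i) * (Real.sqrt (p i) * x i)) ^ 2 := by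
        simp_rw [e1]
    _ ≤ (∑ i, Real.sqrt (p i) ^ 2) * ∑ i, (Real.sqrt (p i) * x i) ^ 2 := h
    _ = ∑ i, p i * x i ^ 2 := by simp_rw [e2, e3, hs, one_mul]

lemma psd_core (P : Matrix (Fin N) (Fin N) ℝ)
    (hPnonneg : ∀ i j, 0 ≤ P i j) (hProw : ∀ i, ∑ j, P i j = 1)
    (v : Fin N → ℝ) (hv : ∀ i, 0 ≤ v i) :
    (Matrix.diagonal (Pᵀ *ᵥ v) - Pᵀ * Matrix.diagonal v * P).PosSemidef := by
  refine Matrix.posSemidef_iff_dotProduct_mulVec.mpr ⟨?_, ?_⟩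
  · show _ᴴ = _
    rw [ctr, transpose_sub, diagonal_transpose, transpose_mul, transpose_mul,
      diagonal_transpose, transpose_transpose, mul_assoc]
  · intro x
    have hsx : star x = x := by
      funext i; simp
    rw [hsx, sub_mulVec, dotProduct_sub]
    have e : ∀ i, (Matrix.diagonal (Pᵀ *ᵥ v) *ᵥ x) i = (∑ j, P j i * v j) * x i := by
      intro i
      rw [mulVec_diagonal]
      simp [mulVec, dotProduct, transpose_apply]
    have t1 : x ⬝ᵥ (Matrix.diagonal (Pᵀ *ᵥ v) *ᵥ x)
        = ∑ j, v j * (∑ i, P j i * x i ^ 2) := by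
      simp only [dotProduct, e, Finset.sum_mul, Finset.mul_sum]
      rw [Finset.sum_comm]
      apply Finset.sum_congr rfl
      intro j _
      apply Finset.sum_congr rfl
      intro i _
      ring
    have t2 : x ⬝ᵥ ((Pᵀ * Matrix.diagonal v * P) *ᵥ x)
        = ∑ j, v j * (∑ i, P j i * x i) ^ 2 := by
      rw [← mulVec_mulVec, ← mulVec_mulVec, Matrix.dotProduct_mulVec,
        vecMul_transpose]
      simp only [dotProduct, mulVec_diagonal]
      apply Finset.sum_congr rfl
      intro j _
      simp only [mulVec, dotProduct]
      ring
    rw [t1, t2, ← Finset.sum_sub_distrib]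
    apply Finset.sum_nonneg
    intro j _
    rw [← mul_sub]
    apply mul_nonneg (hv j)
    rw [sub_nonneg]
    exact cs_step _ _ (fun i => hPnonneg j i) (hProw j)

lemma psd_smul {A : Matrix (Fin N) (Fin N) ℝ} {c : ℝ} (hc : 0 ≤ c)
    (hA : A.PosSemidef) : (c • A).PosSemidef := by
  refine Matrix.posSemidef_iff_dotProduct_mulVec.mpr ⟨?_, ?_⟩
  · show _ᴴ = _
    have hAt : Aᵀ = A := by rw [← ctr]; exact hA.1
    rw [ctr, transpose_smul, hAt]
  · intro x
    rw [smul_mulVec, dotProduct_smul, smul_eq_mul]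
    exact mul_nonneg hc (hA.dotProduct_mulVec_nonneg x)

lemma psd_diag_nonneg {A : Matrix (Fin N) (Fin N) ℝ} (hA : A.PosSemidef) (i : Fin N) :
    0 ≤ A i i := by
  have := hA.dotProduct_mulVec_nonneg (Pi.single i 1)
  simpa [single_dotProduct, mulVec_single] using this

lemma psd_trace_nonneg {A : Matrix (Fin N) (Fin N) ℝ} (hA : A.PosSemidef) :
    0 ≤ A.trace :=
  Finset.sum_nonneg fun i _ => psd_diag_nonneg hA i

lemma phiStar_psd (P : Matrix (Fin N) (Fin N) ℝ)
    (hPnonneg : ∀ i j, 0 ≤ P i j) (hProw : ∀ i, ∑ j, P i j = 1) (q : ℝ)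
    {Y : Matrix (Fin N) (Fin N) ℝ} (hY : Y.PosSemidef) :
    (PhiStar P q Y).PosSemidef := by
  unfold PhiStar
  apply Matrix.PosSemidef.add
  · have h := hY.conjTranspose_mul_mul_same
      ((1 - q) • (1 : Matrix (Fin N) (Fin N) ℝ) + q • P)
    rwa [ctr] at h
  · exact psd_smul (sq_nonneg q)
      (psd_core P hPnonneg hProw _ (fun i => psd_diag_nonneg hY i))

lemma phiStar_sub (P : Matrix (Fin N) (Fin N) ℝ) (q : ℝ)
    (X Y : Matrix (Fin N) (Fin N) ℝ) :
    PhiStar P q (X - Y) = PhiStar P q X - PhiStar P q Y := by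
  unfold PhiStar
  simp only [Matrix.diag_sub, Matrix.mulVec_sub, my_diagonal_sub]
  simp only [Matrix.mul_sub, Matrix.sub_mul, smul_sub]
  abel

lemma phiStar_smul (P : Matrix (Fin N) (Fin N) ℝ) (q : ℝ) (c : ℝ)
    (X : Matrix (Fin N) (Fin N) ℝ) :
    PhiStar P q (c • X) = c • PhiStar P q X := by
  unfold PhiStar
  simp only [Matrix.diag_smul, Matrix.mulVec_smul, Matrix.diagonal_smul,
    Matrix.mul_smul, Matrix.smul_mul, smul_sub, smul_add]
  module

lemma phiStar_iter_sub (P : Matrix (Fin N) (Fin N) ℝ) (q : ℝ) (t : ℕ)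
    (X Y : Matrix (Fin N) (Fin N) ℝ) :
    (PhiStar P q)^[t] (X - Y) = (PhiStar P q)^[t] X - (PhiStar P q)^[t] Y := by
  induction t generalizing X Y with
  | zero => simp
  | succ t ih =>
    simp only [Function.iterate_succ_apply, phiStar_sub, ih]

lemma phiStar_iter_smul (P : Matrix (Fin N) (Fin N) ℝ) (q : ℝ) (c : ℝ) (t : ℕ)
    (X : Matrix (Fin N) (Fin N) ℝ) :
    (PhiStar P q)^[t] (c • X) = c • (PhiStar P q)^[t] X := by
  induction t generalizing X with
  | zero => simp
  | succ t ih =>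
    simp only [Function.iterate_succ_apply, phiStar_smul, ih]

lemma spectralRadius_matrix_ne_top (A : Matrix (Fin N) (Fin N) ℂ) :
    spectralRadius ℂ A ≠ ⊤ := by
  have hfin : (spectrum ℂ A).Finite := Matrix.finite_spectrum A
  have hbdd : BddAbove ((fun k : ℂ => ‖k‖₊) '' spectrum ℂ A) :=
    (hfin.image _).bddAbove
  obtain ⟨C, hC⟩ := hbdd
  have : spectralRadius ℂ A ≤ (C : ENNReal) := by
    rw [spectralRadius]
    apply iSup₂_le
    intro k hk
    exact_mod_cast ENNReal.coe_le_coe.mpr (hC ⟨k, hk, rfl⟩)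
  exact ne_top_of_le_ne_top ENNReal.coe_ne_top this

lemma eig_le_specRad (M : Matrix (Fin N) (Fin N) ℝ) (hM : M.IsHermitian) (i : Fin N) :
    hM.eigenvalues i ≤ specRad M := by
  set μ := hM.eigenvalues i with hμ
  have h1 : μ ∈ spectrum ℝ M := hM.eigenvalues_mem_spectrum_real i
  have h2 : (algebraMap ℝ ℂ μ) ∈ spectrum ℂ (M.map (algebraMap ℝ ℂ)) := by
    rw [spectrum.mem_iff] at h1 ⊢
    intro hUnit
    apply h1
    rw [Matrix.isUnit_iff_isUnit_det] at hUnit ⊢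
    have hmap : algebraMap ℂ (Matrix (Fin N) (Fin N) ℂ) (algebraMap ℝ ℂ μ)
          - M.map (algebraMap ℝ ℂ)
        = (algebraMap ℝ (Matrix (Fin N) (Fin N) ℝ) μ - M).map (algebraMap ℝ ℂ) := by
      rw [Matrix.algebraMap_eq_diagonal, Matrix.algebraMap_eq_diagonal]
      ext a b
      by_cases h : a = b <;>
        simp [h, Matrix.map_apply, Matrix.sub_apply, Matrix.diagonal, Pi.algebraMap_apply]
    rw [hmap] at hUnit
    rw [show ((algebraMap ℝ (Matrix (Fin N) (Fin N) ℝ)) μ - M).map ⇑(algebraMap ℝ ℂ)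
        = (algebraMap ℝ ℂ).mapMatrix ((algebraMap ℝ (Matrix (Fin N) (Fin N) ℝ)) μ - M)
        from rfl, ← RingHom.map_det] at hUnit
    rw [isUnit_iff_ne_zero] at hUnit ⊢
    intro h0
    rw [h0] at hUnit
    simp at hUnit
  have h3 : (‖algebraMap ℝ ℂ μ‖₊ : ENNReal) ≤ spectralRadius ℂ (M.map (algebraMap ℝ ℂ)) :=
    le_iSup₂ (α := ENNReal) _ h2
  have h4 : ‖algebraMap ℝ ℂ μ‖ ≤ specRad M := by
    have := ENNReal.toReal_mono (spectralRadius_matrix_ne_top _) h3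
    simpa [specRad] using this
  calc μ ≤ |μ| := le_abs_self μ
    _ = ‖algebraMap ℝ ℂ μ‖ := by
        rw [show algebraMap ℝ ℂ μ = (μ : ℂ) from rfl, Complex.norm_real, Real.norm_eq_abs]
    _ ≤ specRad M := h4

lemma specRad_smul_one_sub_psd (M : Matrix (Fin N) (Fin N) ℝ) (hM : M.IsHermitian) :
    (specRad M • (1 : Matrix (Fin N) (Fin N) ℝ) - M).PosSemidef := by
  set ρ := specRad M with hρ
  have hU := (Matrix.mem_unitaryGroup_iff).mp (hM.eigenvectorUnitary).2
  set U : Matrix (Fin N) (Fin N) ℝ := (hM.eigenvectorUnitary : Matrix (Fin N) (Fin N) ℝ)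
    with hUdef
  have key : ρ • (1 : Matrix (Fin N) (Fin N) ℝ) - M
      = U * Matrix.diagonal (fun i => ρ - hM.eigenvalues i) * star U := by
    have hdiag : Matrix.diagonal (fun i => ρ - hM.eigenvalues i)
        = ρ • (1 : Matrix (Fin N) (Fin N) ℝ)
          - Matrix.diagonal (RCLike.ofReal ∘ hM.eigenvalues) := by
      ext a b
      by_cases h : a = b <;>
        simp [h, Matrix.diagonal, Matrix.one_apply, Matrix.sub_apply]
    rw [hdiag, Matrix.mul_sub, Matrix.sub_mul]
    rw [mul_smul_comm, mul_one, smul_mul_assoc, hU]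
    conv_lhs => rw [hM.spectral_theorem]
    rfl
  rw [key]
  have hd : (Matrix.diagonal (fun i => ρ - hM.eigenvalues i)).PosSemidef := by
    apply Matrix.PosSemidef.diagonal
    intro i
    exact sub_nonneg.mpr (eig_le_specRad M hM i)
  have := hd.mul_mul_conjTranspose_same U
  rwa [← Matrix.star_eq_conjTranspose] at this

end Stmt11Aux

open Stmt11Aux in
/-- `Tr((Φ*)ᵗ(I−J)) ≤ N · ρ((I−J) B_q (I−J))ᵗ`, where
`B_q = P_qᵀP_q + q²(Γ − PᵀP)` and `Γᵢᵢ = ∑ⱼ p_{ji}`. -/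
theorem stmt11 (N : ℕ) (hN : 1 ≤ N) (P : Matrix (Fin N) (Fin N) ℝ)
    (hPnonneg : ∀ i j, 0 ≤ P i j) (hProw : ∀ i, ∑ j, P i j = 1)
    (q : ℝ) (hq0 : 0 ≤ q) (hq1 : q ≤ 1) (t : ℕ) :
    ((PhiStar P q)^[t]
        ((1 : Matrix (Fin N) (Fin N) ℝ) - Matrix.of fun _ _ => (N : ℝ)⁻¹)).trace
      ≤ (N : ℝ) *
          specRad
            (((1 : Matrix (Fin N) (Fin N) ℝ) - Matrix.of fun _ _ => (N : ℝ)⁻¹) *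
              (((1 - q) • (1 : Matrix (Fin N) (Fin N) ℝ) + q • P)ᵀ *
                  ((1 - q) • (1 : Matrix (Fin N) (Fin N) ℝ) + q • P)
                + q ^ 2 • (Matrix.diagonal (fun i => ∑ j, P j i) - Pᵀ * P)) *
              ((1 : Matrix (Fin N) (Fin N) ℝ) - Matrix.of fun _ _ => (N : ℝ)⁻¹)) ^ t := by
  have hNne : (N : ℝ) ≠ 0 := by positivity
  set J : Matrix (Fin N) (Fin N) ℝ := Matrix.of fun _ _ => (N : ℝ)⁻¹ with hJdef
  set Pi : Matrix (Fin N) (Fin N) ℝ := 1 - J with hPidef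
  set A : Matrix (Fin N) (Fin N) ℝ := (1 - q) • 1 + q • P with hAdef
  set G : Matrix (Fin N) (Fin N) ℝ :=
    Matrix.diagonal (fun i => ∑ j, P j i) - Pᵀ * P with hGdef
  set Bq : Matrix (Fin N) (Fin N) ℝ := Aᵀ * A + q ^ 2 • G with hBqdef
  set M : Matrix (Fin N) (Fin N) ℝ := Pi * Bq * Pi with hMdef
  set ρ : ℝ := specRad M with hρdef
  have hρ0 : 0 ≤ ρ := by rw [hρdef]; exact ENNReal.toReal_nonneg
  clear_value J Pi A G Bq M ρ
  -- basic J facts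
  have hJJ : J * J = J := by
    ext a b
    simp only [hJdef, Matrix.mul_apply, Matrix.of_apply, Finset.sum_const,
      Finset.card_univ, Fintype.card_fin, nsmul_eq_mul]
    field_simp
  have hJT : Jᵀ = J := by
    ext a b; simp [hJdef]
  have hPJ : P * J = J := by
    ext a b
    simp only [hJdef, Matrix.mul_apply, Matrix.of_apply]
    rw [← Finset.sum_mul, hProw, one_mul]
  have hAJ : A * J = J := by
    rw [hAdef, Matrix.add_mul, Matrix.smul_mul, Matrix.smul_mul, Matrix.one_mul, hPJ,
      ← add_smul]
    simp
  have hJAT : J * Aᵀ = J := by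
    have := congrArg Matrix.transpose hAJ
    rwa [Matrix.transpose_mul, hJT] at this
  have hGT : Gᵀ = G := by
    rw [hGdef, Matrix.transpose_sub, Matrix.diagonal_transpose, Matrix.transpose_mul,
      Matrix.transpose_transpose]
  have hGJ : G * J = 0 := by
    ext a b
    rw [hGdef, hJdef]
    simp only [Matrix.sub_apply, Matrix.zero_apply, Matrix.mul_apply,
      Matrix.diagonal_apply, Matrix.of_apply, Matrix.transpose_apply]
    simp only [sub_mul, Finset.sum_sub_distrib, ite_mul, zero_mul]
    rw [Finset.sum_ite_eq, if_pos (Finset.mem_univ a)]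
    rw [sub_eq_zero, ← Finset.sum_mul]
    congr 1
    rw [Finset.sum_comm]
    apply Finset.sum_congr rfl
    intro j _
    rw [← Finset.mul_sum, hProw, mul_one]
  have hJG : J * G = 0 := by
    have := congrArg Matrix.transpose hGJ
    rwa [Matrix.transpose_mul, hGT, hJT, Matrix.transpose_zero] at this
  have hPiT : Piᵀ = Pi := by
    rw [hPidef, Matrix.transpose_sub, Matrix.transpose_one, hJT]
  have hPiPi : Pi * Pi = Pi := by
    have expand : (1 - J) * (1 - J) = 1 - J - J + J * J := by noncomm_ring
    rw [hPidef, expand, hJJ]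
    abel
  -- expansion helper
  have expand : ∀ X : Matrix (Fin N) (Fin N) ℝ,
      (1 - J) * X * (1 - J) = X - X * J - J * X + J * (X * J) := by
    intro X; noncomm_ring
  -- PhiStar applied to Pi
  have hdiagPi : Matrix.diag Pi = fun _ => 1 - (N : ℝ)⁻¹ := by
    funext i
    simp [hPidef, hJdef, Matrix.diag, Matrix.sub_apply, Matrix.one_apply]
  have hmv : (Pᵀ *ᵥ fun _ => 1 - (N : ℝ)⁻¹)
      = (1 - (N : ℝ)⁻¹) • fun i => ∑ j, P j i := by
    funext i
    show (∑ x, Pᵀ i x * (1 - (N : ℝ)⁻¹)) = (1 - (N : ℝ)⁻¹) * ∑ j, P j i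
    simp only [Matrix.transpose_apply]
    rw [← Finset.sum_mul, mul_comm]
  have hdiagc : Matrix.diagonal (fun _ : Fin N => 1 - (N : ℝ)⁻¹)
      = (1 - (N : ℝ)⁻¹) • (1 : Matrix (Fin N) (Fin N) ℝ) := by
    ext a b
    by_cases h : a = b <;> simp [h, Matrix.diagonal, Matrix.one_apply]
  have hPhiPi : PhiStar P q Pi = Aᵀ * Pi * A + q ^ 2 • ((1 - (N : ℝ)⁻¹) • G) := by
    unfold PhiStar
    rw [← hAdef, hdiagPi, hmv, Matrix.diagonal_smul, hdiagc, Matrix.mul_smul,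
      Matrix.smul_mul, Matrix.mul_one, hGdef]
    module
  -- matrix part identity
  have pa : (Aᵀ * A) * J = Aᵀ * J := by rw [mul_assoc, hAJ]
  have pb : J * (Aᵀ * A) = J * A := by rw [← mul_assoc, hJAT]
  have pc : J * ((Aᵀ * A) * J) = J := by
    rw [pa, ← mul_assoc, hJAT, hJJ]
  have qa : (Aᵀ * (J * A)) * J = Aᵀ * J := by
    rw [mul_assoc, mul_assoc, hAJ, hJJ]
  have qb : J * (Aᵀ * (J * A)) = J * A := by
    rw [← mul_assoc, hJAT, ← mul_assoc, hJJ]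
  have qc : J * ((Aᵀ * (J * A)) * J) = J := by
    rw [qa, ← mul_assoc, hJAT, hJJ]
  have mid : Aᵀ * (1 - J) * A = Aᵀ * A - Aᵀ * (J * A) := by
    rw [Matrix.mul_sub, Matrix.mul_one, Matrix.sub_mul, mul_assoc]
  have mp : (1 - J) * (Aᵀ * A) * (1 - J) - Aᵀ * (1 - J) * A
      = (1 - J) * (Aᵀ * (J * A)) * (1 - J) := by
    rw [expand (Aᵀ * A), expand (Aᵀ * (J * A)), mid, pc, qc, pa, pb, qa, qb]
    abel
  -- transpose form
  have hJJhelp : J * (J * (A * Pi)) = J * (A * Pi) := by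
    rw [← mul_assoc, hJJ]
  have tform : (J * A * Pi)ᵀ * (J * A * Pi) = Pi * (Aᵀ * (J * A)) * Pi := by
    rw [Matrix.transpose_mul, Matrix.transpose_mul, hJT, hPiT]
    simp only [mul_assoc]
    rw [hJJhelp]
  -- q² part
  have hgp : Pi * G * Pi = G := by
    rw [hPidef, expand G, hGJ, hJG]
    simp
  -- the key identity
  have ident : Pi * Bq * Pi - PhiStar P q Pi
      = (J * A * Pi)ᵀ * (J * A * Pi) + (q ^ 2 * (N : ℝ)⁻¹) • G := by
    have hsplit : Pi * Bq * Pi = Pi * (Aᵀ * A) * Pi + q ^ 2 • G := by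
      rw [hBqdef, Matrix.mul_add, Matrix.add_mul]
      congr 1
      rw [Matrix.mul_smul, Matrix.smul_mul, hgp]
    rw [hsplit, hPhiPi, tform]
    have hmp' : Pi * (Aᵀ * A) * Pi - Aᵀ * Pi * A = Pi * (Aᵀ * (J * A)) * Pi := by
      rw [hPidef]; exact mp
    have hsm : q ^ 2 • G - q ^ 2 • ((1 - (N : ℝ)⁻¹) • G) = (q ^ 2 * (N : ℝ)⁻¹) • G := by
      rw [smul_smul, ← sub_smul]
      congr 1
      ring
    calc Pi * (Aᵀ * A) * Pi + q ^ 2 • G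
          - (Aᵀ * Pi * A + q ^ 2 • ((1 - (N : ℝ)⁻¹) • G))
        = (Pi * (Aᵀ * A) * Pi - Aᵀ * Pi * A)
            + (q ^ 2 • G - q ^ 2 • ((1 - (N : ℝ)⁻¹) • G)) := by abel
      _ = Pi * (Aᵀ * (J * A)) * Pi + (q ^ 2 * (N : ℝ)⁻¹) • G := by rw [hmp', hsm]
  -- G is PSD
  have hGpsd : G.PosSemidef := by
    have h := psd_core P hPnonneg hProw (fun _ => 1) (fun _ => zero_le_one)
    have e1 : (Pᵀ *ᵥ fun _ : Fin N => (1 : ℝ)) = fun i => ∑ j, P j i := by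
      funext i
      simp [Matrix.mulVec, dotProduct, Matrix.transpose_apply]
    have e2 : Matrix.diagonal (fun _ : Fin N => (1 : ℝ)) = 1 := Matrix.diagonal_one
    rw [e1, e2, Matrix.mul_one] at h
    rwa [hGdef]
  -- Pi*Bq*Pi - PhiStar Pi is PSD
  have h2 : (Pi * Bq * Pi - PhiStar P q Pi).PosSemidef := by
    rw [ident]
    apply Matrix.PosSemidef.add
    · have h := Matrix.posSemidef_conjTranspose_mul_self (J * A * Pi)
      rwa [ctr] at h
    · exact psd_smul (by positivity) hGpsd
  -- M is Hermitian
  have hBqT : Bqᵀ = Bq := by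
    rw [hBqdef, Matrix.transpose_add, Matrix.transpose_mul, Matrix.transpose_transpose,
      Matrix.transpose_smul, hGT]
  have hMT : Mᵀ = M := by
    rw [hMdef, Matrix.transpose_mul, Matrix.transpose_mul, hPiT, hBqT, mul_assoc]
  have hMherm : M.IsHermitian := by
    show Mᴴ = M
    rw [ctr, hMT]
  -- ρ•Pi - M is PSD
  have h1 : (ρ • Pi - M).PosSemidef := by
    have hst := specRad_smul_one_sub_psd M hMherm
    have hconj := hst.mul_mul_conjTranspose_same Pi
    rw [ctr, hPiT] at hconj
    have heq : Pi * (specRad M • 1 - M) * Pi = ρ • Pi - M := by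
      have e1 : Pi * (specRad M • 1 - M) * Pi
          = specRad M • (Pi * Pi) - Pi * M * Pi := by
        rw [Matrix.mul_sub, Matrix.sub_mul, mul_smul_comm, Matrix.mul_one, Matrix.smul_mul]
      have e2 : Pi * M * Pi = M := by
        rw [hMdef]
        calc Pi * (Pi * Bq * Pi) * Pi = Pi * (Pi * (Bq * (Pi * Pi))) := by
              simp only [mul_assoc]
          _ = Pi * (Pi * (Bq * Pi)) := by rw [hPiPi]
          _ = (Pi * Pi) * (Bq * Pi) := by rw [mul_assoc]
          _ = Pi * (Bq * Pi) := by rw [hPiPi]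
          _ = Pi * Bq * Pi := by rw [mul_assoc]
      rw [e1, hPiPi, e2, ← hρdef]
    rwa [heq] at hconj
  -- combine: ρ•Pi - PhiStar Pi is PSD
  have hstep : (ρ • Pi - PhiStar P q Pi).PosSemidef := by
    have h3 := h1.add h2
    rw [← hMdef] at h3
    rwa [sub_add_sub_cancel] at h3
  -- trace of Pi
  have htrJ : J.trace = 1 := by
    simp only [Matrix.trace, Matrix.diag, hJdef, Matrix.of_apply, Finset.sum_const,
      Finset.card_univ, Fintype.card_fin, nsmul_eq_mul]
    field_simp
  have htrPi : Pi.trace = (N : ℝ) - 1 := by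
    rw [hPidef, Matrix.trace_sub, Matrix.trace_one, htrJ]
    simp
  have hpsd_all : ∀ s : ℕ,
      ((PhiStar P q)^[s] (ρ • Pi - PhiStar P q Pi)).PosSemidef := by
    intro s
    induction s with
    | zero => simpa using hstep
    | succ s ih =>
      rw [Function.iterate_succ_apply']
      exact phiStar_psd P hPnonneg hProw q ih
  -- main induction
  have main : ∀ s : ℕ, ((PhiStar P q)^[s] Pi).trace ≤ ((N : ℝ) - 1) * ρ ^ s := by
    intro s
    induction s with
    | zero =>
      simp [htrPi]
    | succ s ih =>
      have hiter : (PhiStar P q)^[s + 1] Pi = (PhiStar P q)^[s] (PhiStar P q Pi) :=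
        Function.iterate_succ_apply _ _ _
      have hpsd := hpsd_all s
      rw [phiStar_iter_sub, phiStar_iter_smul] at hpsd
      have htr := psd_trace_nonneg hpsd
      rw [Matrix.trace_sub, Matrix.trace_smul, sub_nonneg, smul_eq_mul] at htr
      calc ((PhiStar P q)^[s + 1] Pi).trace
          = ((PhiStar P q)^[s] (PhiStar P q Pi)).trace := by rw [hiter]
        _ ≤ ρ * ((PhiStar P q)^[s] Pi).trace := htr
        _ ≤ ρ * (((N : ℝ) - 1) * ρ ^ s) := by
            exact mul_le_mul_of_nonneg_left ih hρ0
        _ = ((N : ℝ) - 1) * ρ ^ (s + 1) := by ring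
  calc ((PhiStar P q)^[t] Pi).trace ≤ ((N : ℝ) - 1) * ρ ^ t := main t
    _ ≤ (N : ℝ) * ρ ^ t := by
        apply mul_le_mul_of_nonneg_right _ (pow_nonneg hρ0 t)
        linarith
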